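/- Let H be a complex Hilbert space, C compact on H with simple dominant positive eigenvalue μ₁ and normalized eigenvector u₁, and suppose a₀ ∈ H has ‖a₀‖ = 1 and E_C(μ₁)a₀ = α u₁ with α > 0. Suppose further ‖(μ₁⁻¹C)^n E_C(σ(C)∖{μ₁})a₀‖ ≤ c₁⁻¹ δ̄^{n−ℓ₀} for constants c₁ > 0, ℓ₀ ∈ ℕ, 0 < δ̄ < 1, and let ‖·‖ be equivalent to the decomposition norm with constants c₁ ≤ · ≤ C₁. Then the normalized power iterates a_n = C^n a₀ / ‖C^n a₀‖ satisfy α·dist(span{a_n}, span{u₁}) ≤ ‖(μ₁⁻¹C)^n a₀ − α u₁‖ ≤ (C₁/c₁) δ̄^{n−ℓ₀}, and the Rayleigh quotients ρ_{n+1} = ⟨C a_n, a_n⟩ satisfy |ρ_{n+1} − μ₁| ≤ α⁻¹(μ₁ + ‖C‖)(C₁/c₁) δ̄^{n−ℓ₀}. -/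

import Mathlib

set_option maxHeartbeats 1000000

private lemma pyth_aux {H : Type*} [NormedAddCommGroup H] [InnerProductSpace ℂ H]
    (x y : H) (h : (inner ℂ x y : ℂ) = 0) : ‖x + y‖ ^ 2 = ‖x‖ ^ 2 + ‖y‖ ^ 2 := by
  rw [@norm_add_sq ℂ, h]
  simp

private lemma sq_le_aux {a b : ℝ} (ha : 0 ≤ a) (hb : 0 ≤ b) (h : a ^ 2 ≤ b ^ 2) :
    a ≤ b := by nlinarith

private lemma quad_aux {α K E x : ℝ} (hx0 : 0 ≤ x) (hxE : x ≤ E) (hEK : E ≤ K)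
    (hKα : K ≤ α) :
    α ^ 2 * (E ^ 2 - x ^ 2) ≤ K ^ 2 * ((α - x) ^ 2 + (E ^ 2 - x ^ 2)) := by
  have h1 : 0 ≤ (α ^ 2 - K ^ 2) * (K ^ 2 - E ^ 2) :=
    mul_nonneg (by nlinarith) (by nlinarith)
  nlinarith [sq_nonneg (α * x - K ^ 2)]

/-- Lemma `lem:contract`: linear convergence of the power iteration for a
(not necessarily normal) compact operator `C` with simple dominant positive
eigenvalue `μ₁` and eigenvector `u₁`. `P₁` and `P₂` denote the Riesz projections
onto the principal eigenspace and its spectral complement (`P₁ + P₂ = I`), with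
the decomposition norm `‖P₁·‖ + ‖P₂·‖` equivalent to `‖·‖` with constants
`c₁, C₁`, and the off-eigenspace contraction `‖(μ₁⁻¹C)^n P₂ a₀‖ ≤ c₁⁻¹ δ̄^{n-ℓ₀}`. -/
theorem power_iteration_linear_convergence
    {H : Type*} [NormedAddCommGroup H] [InnerProductSpace ℂ H] [CompleteSpace H]
    (C : H →L[ℂ] H) (hC : IsCompactOperator ⇑C)
    (μ₁ : ℝ) (hμ₁ : 0 < μ₁) (u₁ : H) (hu₁ : ‖u₁‖ = 1) (heig : C u₁ = (μ₁ : ℂ) • u₁)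
    (P₁ P₂ : H →L[ℂ] H)
    (hsum : P₁ + P₂ = ContinuousLinearMap.id ℂ H)
    (hP₁C : P₁.comp C = C.comp P₁) (hP₂C : P₂.comp C = C.comp P₂)
    (a₀ : H) (ha₀ : ‖a₀‖ = 1) (α : ℝ) (hα : 0 < α) (hP₁a₀ : P₁ a₀ = (α : ℂ) • u₁)
    (c₁ C₁ : ℝ) (hc₁ : 0 < c₁) (hC₁ : 0 < C₁)
    (hequiv : ∀ u : H, c₁ * (‖P₁ u‖ + ‖P₂ u‖) ≤ ‖u‖ ∧ ‖u‖ ≤ C₁ * (‖P₁ u‖ + ‖P₂ u‖))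
    (δb : ℝ) (hδb0 : 0 < δb) (hδb1 : δb < 1) (ℓ₀ : ℕ)
    (hcontr : ∀ n : ℕ,
      ‖((((μ₁ : ℂ)⁻¹ • C) ^ n) (P₂ a₀))‖ ≤ c₁⁻¹ * δb ^ ((n : ℤ) - (ℓ₀ : ℤ)))
    -- normalized power iterates
    (a : ℕ → H) (ha0 : a 0 = a₀)
    (harec : ∀ n : ℕ, a (n + 1) = (‖C (a n)‖⁻¹ : ℝ) • C (a n)) :
    ∀ n : ℕ,
      α * (⨅ c : ℝ, ‖(c : ℂ) • a n - u₁‖) ≤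
        ‖((((μ₁ : ℂ)⁻¹ • C) ^ n) a₀) - (α : ℂ) • u₁‖ ∧
      ‖((((μ₁ : ℂ)⁻¹ • C) ^ n) a₀) - (α : ℂ) • u₁‖ ≤
        (C₁ / c₁) * δb ^ ((n : ℤ) - (ℓ₀ : ℤ)) ∧
      ‖(inner ℂ (C (a n)) (a n) : ℂ) - (μ₁ : ℂ)‖ ≤
        α⁻¹ * (μ₁ + ‖C‖) * (C₁ / c₁) * δb ^ ((n : ℤ) - (ℓ₀ : ℤ)) := by
  have hμc : (μ₁ : ℂ) ≠ 0 := Complex.ofReal_ne_zero.mpr hμ₁.ne'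
  set T : H →L[ℂ] H := (μ₁ : ℂ)⁻¹ • C with hTdef
  -- real smul vs complex smul
  have hsm : ∀ (r : ℝ) (x : H), ((r : ℂ)) • x = r • x := by
    intro r x
    rw [← Complex.coe_algebraMap, algebraMap_smul]
  -- T fixes u₁
  have hTu : T u₁ = u₁ := by
    rw [hTdef]
    simp only [ContinuousLinearMap.smul_apply, heig, smul_smul,
      inv_mul_cancel₀ hμc, one_smul]
  have hTnu : ∀ m : ℕ, (T ^ m) u₁ = u₁ := by
    intro m
    induction m with
    | zero => simp
    | succ m ih => rw [pow_succ, ContinuousLinearMap.mul_apply, hTu, ih]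
  -- commutation of P₁, P₂ with powers of T
  have hP₁pt : ∀ x : H, P₁ (C x) = C (P₁ x) := fun x =>
    DFunLike.congr_fun hP₁C x
  have hP₂pt : ∀ x : H, P₂ (C x) = C (P₂ x) := fun x =>
    DFunLike.congr_fun hP₂C x
  have hCn₁ : ∀ (m : ℕ) (x : H), P₁ ((C ^ m) x) = (C ^ m) (P₁ x) := by
    intro m
    induction m with
    | zero => simp
    | succ m ih =>
      intro x
      rw [pow_succ, ContinuousLinearMap.mul_apply, ContinuousLinearMap.mul_apply,
        ih (C x), hP₁pt x]
  have hCn₂ : ∀ (m : ℕ) (x : H), P₂ ((C ^ m) x) = (C ^ m) (P₂ x) := by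
    intro m
    induction m with
    | zero => simp
    | succ m ih =>
      intro x
      rw [pow_succ, ContinuousLinearMap.mul_apply, ContinuousLinearMap.mul_apply,
        ih (C x), hP₂pt x]
  have hTpow : ∀ m : ℕ, T ^ m = ((μ₁ : ℂ)⁻¹) ^ m • C ^ m := by
    intro m; rw [hTdef, smul_pow]
  have hTn₁ : ∀ (m : ℕ) (x : H), P₁ ((T ^ m) x) = (T ^ m) (P₁ x) := by
    intro m x
    rw [hTpow m]
    simp only [ContinuousLinearMap.smul_apply, map_smul, hCn₁]
  have hTn₂ : ∀ (m : ℕ) (x : H), P₂ ((T ^ m) x) = (T ^ m) (P₂ x) := by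
    intro m x
    rw [hTpow m]
    simp only [ContinuousLinearMap.smul_apply, map_smul, hCn₂]
  have hdec : ∀ x : H, P₁ x + P₂ x = x := by
    intro x
    have := DFunLike.congr_fun hsum x
    simpa using this
  -- decomposition of the iterates
  have hbm : ∀ m : ℕ, (T ^ m) a₀ = (α : ℂ) • u₁ + (T ^ m) (P₂ a₀) := by
    intro m
    conv_lhs => rw [← hdec a₀]
    rw [map_add, hP₁a₀, map_smul, hTnu m]
  have hPb₁ : ∀ m : ℕ, P₁ ((T ^ m) a₀) = (α : ℂ) • u₁ := by
    intro m
    rw [hTn₁, hP₁a₀, map_smul, hTnu m]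
  have hPb₂ : ∀ m : ℕ, P₂ ((T ^ m) a₀) = (T ^ m) (P₂ a₀) := fun m => hTn₂ m a₀
  have hαu : ‖(α : ℂ) • u₁‖ = α := by
    rw [norm_smul, hu₁, Complex.norm_real, Real.norm_eq_abs, abs_of_pos hα, mul_one]
  -- C₁ ≥ 1
  have hC₁1 : (1 : ℝ) ≤ C₁ := by
    by_contra hlt
    push_neg at hlt
    set B : ℝ := (1 + C₁) * c₁⁻¹ * (δb ^ ℓ₀)⁻¹ with hB
    have hB0 : 0 < B := by positivity
    obtain ⟨m, hm⟩ := exists_pow_lt_of_lt_one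
      (show (0:ℝ) < α * (1 - C₁) / B from
        div_pos (mul_pos hα (by linarith)) hB0) hδb1
    have hEm := hcontr m
    have hzp : δb ^ ((m : ℤ) - (ℓ₀ : ℤ)) = δb ^ m * (δb ^ ℓ₀)⁻¹ := by
      rw [zpow_sub₀ hδb0.ne', zpow_natCast, zpow_natCast, div_eq_mul_inv]
    have hup := (hequiv ((T ^ m) a₀)).2
    rw [hPb₁ m, hPb₂ m, hαu] at hup
    have hlow : α - ‖(T ^ m) (P₂ a₀)‖ ≤ ‖(T ^ m) a₀‖ := by
      have h1 : ‖(α : ℂ) • u₁‖ ≤ ‖(T ^ m) a₀‖ + ‖(T ^ m) (P₂ a₀)‖ := by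
        calc ‖(α : ℂ) • u₁‖ = ‖(T ^ m) a₀ - (T ^ m) (P₂ a₀)‖ := by
              rw [hbm m]; congr 1; abel
          _ ≤ ‖(T ^ m) a₀‖ + ‖(T ^ m) (P₂ a₀)‖ := norm_sub_le _ _
      rw [hαu] at h1; linarith
    have hkey : α * (1 - C₁) ≤ B * δb ^ m := by
      have : α * (1 - C₁) ≤ (1 + C₁) * ‖(T ^ m) (P₂ a₀)‖ := by nlinarith
      calc α * (1 - C₁) ≤ (1 + C₁) * ‖(T ^ m) (P₂ a₀)‖ := this
        _ ≤ (1 + C₁) * (c₁⁻¹ * δb ^ ((m : ℤ) - (ℓ₀ : ℤ))) := by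
            apply mul_le_mul_of_nonneg_left hEm (by positivity)
        _ = B * δb ^ m := by rw [hzp, hB]; ring
    have : B * δb ^ m < α * (1 - C₁) := by
      calc B * δb ^ m < B * (α * (1 - C₁) / B) :=
            mul_lt_mul_of_pos_left hm hB0
        _ = α * (1 - C₁) := by field_simp
    linarith
  -- scaling relation between T^m a₀ and a m
  have hscal : ∀ m : ℕ, ∃ t : ℝ, 0 ≤ t ∧ (T ^ m) a₀ = ((t : ℝ) : ℂ) • a m := by
    intro m
    induction m with
    | zero => exact ⟨1, zero_le_one, by simp [ha0]⟩
    | succ m ih =>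
      obtain ⟨t, ht0, hteq⟩ := ih
      have hca : C (a m) = ((‖C (a m)‖ : ℝ) : ℂ) • a (m + 1) := by
        rcases eq_or_ne (C (a m)) 0 with h0 | h0
        · rw [h0, harec m, h0]; simp
        · rw [harec m, hsm, smul_smul, mul_inv_cancel₀ (norm_ne_zero_iff.mpr h0), one_smul]
      refine ⟨t * (μ₁⁻¹ * ‖C (a m)‖), by positivity, ?_⟩
      have hsc : ((t * (μ₁⁻¹ * ‖C (a m)‖) : ℝ) : ℂ) =
          (t : ℂ) * (((μ₁ : ℂ))⁻¹ * ((‖C (a m)‖ : ℝ) : ℂ)) := by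
        push_cast; ring
      rw [pow_succ', ContinuousLinearMap.mul_apply, hteq, map_smul, hTdef]
      simp only [ContinuousLinearMap.smul_apply]
      rw [hsc]
      conv_lhs => rw [hca]
      rw [smul_smul, smul_smul, mul_assoc]
  -- norms of the iterates
  have hanorm : ∀ m : ℕ, ‖a m‖ = 1 ∨ a m = 0 := by
    intro m
    induction m with
    | zero => left; rw [ha0]; exact ha₀
    | succ m ih =>
      rcases eq_or_ne (C (a m)) 0 with h0 | h0
      · right; rw [harec m, h0]; simp
      · left
        rw [harec m, norm_smul, Real.norm_eq_abs, abs_of_nonneg (by positivity),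
          inv_mul_cancel₀ (norm_ne_zero_iff.mpr h0)]
  -- main proof
  intro n
  obtain ⟨t, ht0, htb⟩ := hscal n
  set d : ℝ := δb ^ ((n : ℤ) - (ℓ₀ : ℤ)) with hd
  have hd0 : 0 < d := by rw [hd]; exact zpow_pos hδb0 _
  set K : ℝ := C₁ / c₁ * d with hK
  have hK0 : 0 < K := by positivity
  set e : H := (T ^ n) (P₂ a₀) with he
  set E : ℝ := ‖e‖ with hE
  have hE0 : 0 ≤ E := norm_nonneg _
  have hEd : E ≤ c₁⁻¹ * d := hcontr n
  have hEK : E ≤ K := by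
    calc E ≤ c₁⁻¹ * d := hEd
      _ ≤ C₁ / c₁ * d := by
          apply mul_le_mul_of_nonneg_right _ hd0.le
          rw [div_eq_mul_inv]
          nlinarith [inv_pos.mpr hc₁]
      _ = K := hK.symm
  have hbe : (T ^ n) a₀ - (α : ℂ) • u₁ = e := by rw [hbm n]; abel
  -- Goal 2
  have hG2 : ‖(T ^ n) a₀ - (α : ℂ) • u₁‖ ≤ C₁ / c₁ * d := by
    rw [hbe]; exact hEK
  -- Goal 1
  have hG1 : α * (⨅ c : ℝ, ‖(c : ℂ) • a n - u₁‖) ≤ ‖(T ^ n) a₀ - (α : ℂ) • u₁‖ := by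
    have hbdd : BddBelow (Set.range fun c : ℝ => ‖(c : ℂ) • a n - u₁‖) := by
      refine ⟨0, ?_⟩
      rintro x ⟨c, rfl⟩
      exact norm_nonneg _
    have h1 : (⨅ c : ℝ, ‖(c : ℂ) • a n - u₁‖) ≤ ‖((α⁻¹ * t : ℝ) : ℂ) • a n - u₁‖ :=
      ciInf_le hbdd _
    have h2 : (α : ℂ) • (((α⁻¹ * t : ℝ) : ℂ) • a n - u₁) = (T ^ n) a₀ - (α : ℂ) • u₁ := by
      rw [smul_sub, smul_smul, htb]
      congr 2
      push_cast
      rw [← mul_assoc, mul_inv_cancel₀ (Complex.ofReal_ne_zero.mpr hα.ne'), one_mul]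
    calc α * (⨅ c : ℝ, ‖(c : ℂ) • a n - u₁‖)
        ≤ α * ‖((α⁻¹ * t : ℝ) : ℂ) • a n - u₁‖ := by
          exact mul_le_mul_of_nonneg_left h1 hα.le
      _ = ‖(α : ℂ) • (((α⁻¹ * t : ℝ) : ℂ) • a n - u₁)‖ := by
          rw [norm_smul, Complex.norm_real, Real.norm_eq_abs, abs_of_pos hα]
      _ = ‖(T ^ n) a₀ - (α : ℂ) • u₁‖ := by rw [h2]
  refine ⟨hG1, hG2, ?_⟩
  -- Goal 3
  rcases hanorm n with han | han
  · -- ‖a n‖ = 1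
    set c : ℂ := (inner ℂ u₁ (a n) : ℂ) with hc
    set v : H := a n - c • u₁ with hv
    have huu : (inner ℂ u₁ u₁ : ℂ) = 1 := by
      rw [inner_self_eq_norm_sq_to_K, hu₁]; norm_num
    have hu₁v : (inner ℂ u₁ v : ℂ) = 0 := by
      rw [hv, inner_sub_right, inner_smul_right, huu, mul_one, hc, sub_self]
    have hanv : a n = c • u₁ + v := by rw [hv]; abel
    have hnorm1 : ‖c • u₁‖ ^ 2 + ‖v‖ ^ 2 = 1 := by
      have hp := pyth_aux (c • u₁) v (by rw [inner_smul_left, hu₁v, mul_zero])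
      rw [← hanv, han] at hp
      linarith [hp]
    have hv1 : ‖v‖ ≤ 1 := by nlinarith [norm_nonneg (c • u₁), norm_nonneg v]
    have hCv : C (a n) - (μ₁ : ℂ) • a n = C v - (μ₁ : ℂ) • v := by
      rw [hanv, map_add, map_smul, heig, smul_add, smul_smul, smul_smul, mul_comm]
      abel
    have haa : (inner ℂ (a n) (a n) : ℂ) = 1 := by
      rw [inner_self_eq_norm_sq_to_K, han]; norm_num
    have hρid : (inner ℂ (C (a n)) (a n) : ℂ) - (μ₁ : ℂ) =
        (inner ℂ (C v - (μ₁ : ℂ) • v) (a n) : ℂ) := by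
      rw [← hCv, inner_sub_left, inner_smul_left, haa, mul_one, Complex.conj_ofReal]
    have hbnd : ‖(inner ℂ (C (a n)) (a n) : ℂ) - (μ₁ : ℂ)‖ ≤ (μ₁ + ‖C‖) * ‖v‖ := by
      rw [hρid]
      calc ‖(inner ℂ (C v - (μ₁ : ℂ) • v) (a n) : ℂ)‖
          ≤ ‖C v - (μ₁ : ℂ) • v‖ * ‖a n‖ := norm_inner_le_norm _ _
        _ = ‖C v - (μ₁ : ℂ) • v‖ := by rw [han, mul_one]
        _ ≤ ‖C v‖ + ‖(μ₁ : ℂ) • v‖ := norm_sub_le _ _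
        _ ≤ ‖C‖ * ‖v‖ + μ₁ * ‖v‖ := by
            refine add_le_add (C.le_opNorm v) (le_of_eq ?_)
            rw [norm_smul, Complex.norm_real, Real.norm_eq_abs, abs_of_pos hμ₁]
        _ = (μ₁ + ‖C‖) * ‖v‖ := by ring
    have hva : ‖v‖ * α ≤ K := by
      rcases le_or_gt α K with hKα | hKα
      · calc ‖v‖ * α ≤ 1 * α := mul_le_mul_of_nonneg_right hv1 hα.le
          _ = α := one_mul _
          _ ≤ K := hKα
      · -- K < α
        have hEα : E < α := lt_of_le_of_lt hEK hKα
        have hbnt : ‖(T ^ n) a₀‖ = t := by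
          rw [htb, norm_smul, Complex.norm_real, Real.norm_eq_abs, abs_of_nonneg ht0,
            han, mul_one]
        have htα : α - E ≤ t := by
          have h1 : ‖(α : ℂ) • u₁‖ ≤ ‖(T ^ n) a₀‖ + E := by
            calc ‖(α : ℂ) • u₁‖ = ‖(T ^ n) a₀ - e‖ := by rw [hbm n]; congr 1; abel
              _ ≤ ‖(T ^ n) a₀‖ + ‖e‖ := norm_sub_le _ _
          rw [hαu, hbnt] at h1
          linarith
        have ht0' : 0 < t := by linarith
        set h : ℂ := (inner ℂ u₁ e : ℂ) with hh
        set x : ℝ := ‖h‖ with hx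
        have hx0 : 0 ≤ x := norm_nonneg _
        have hxE : x ≤ E := by
          have := norm_inner_le_norm (𝕜 := ℂ) u₁ e
          rwa [hu₁, one_mul] at this
        have htc : ((t : ℝ) : ℂ) * c = (α : ℂ) + h := by
          have h1 : (inner ℂ u₁ ((T ^ n) a₀) : ℂ) = ((t : ℝ) : ℂ) * c := by
            rw [htb, inner_smul_right]
          have h2 : (inner ℂ u₁ ((T ^ n) a₀) : ℂ) = (α : ℂ) + h := by
            rw [hbm n, inner_add_right, inner_smul_right, huu, mul_one]
          rw [← h1, h2]
        have htv : ((t : ℝ) : ℂ) • v = e - h • u₁ := by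
          calc ((t : ℝ) : ℂ) • v = ((t : ℝ) : ℂ) • a n - ((t : ℝ) : ℂ) • (c • u₁) := by
                rw [hv, smul_sub]
            _ = (T ^ n) a₀ - (((t : ℝ) : ℂ) * c) • u₁ := by rw [← htb, smul_smul]
            _ = ((α : ℂ) • u₁ + e) - ((α : ℂ) + h) • u₁ := by rw [hbm n, htc]
            _ = e - h • u₁ := by rw [add_smul]; abel
        set W : ℝ := ‖e - h • u₁‖ with hW
        have hW0 : 0 ≤ W := norm_nonneg _
        have htW : t * ‖v‖ = W := by
          rw [hW, ← htv, norm_smul, Complex.norm_real, Real.norm_eq_abs, abs_of_nonneg ht0]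
        have hu₁eh : (inner ℂ u₁ (e - h • u₁) : ℂ) = 0 := by
          rw [inner_sub_right, inner_smul_right, huu, mul_one, hh, sub_self]
        have hpy1 : W ^ 2 + x ^ 2 = E ^ 2 := by
          have horth : (inner ℂ (e - h • u₁) (h • u₁) : ℂ) = 0 := by
            rw [inner_smul_right, ← inner_conj_symm, hu₁eh]
            simp
          have hp := pyth_aux (e - h • u₁) (h • u₁) horth
          have he2 : e - h • u₁ + h • u₁ = e := by abel
          rw [he2] at hp
          have hhu : ‖h • u₁‖ = x := by rw [norm_smul, hu₁, mul_one, hx]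
          rw [hhu] at hp
          rw [hE]
          linarith
        have hpy2 : t ^ 2 = ‖((α : ℂ) + h) • u₁‖ ^ 2 + W ^ 2 := by
          have horth : (inner ℂ (((α : ℂ) + h) • u₁) (e - h • u₁) : ℂ) = 0 := by
            rw [inner_smul_left, hu₁eh, mul_zero]
          have hp := pyth_aux (((α : ℂ) + h) • u₁) (e - h • u₁) horth
          have hb2 : ((α : ℂ) + h) • u₁ + (e - h • u₁) = (T ^ n) a₀ := by
            rw [hbm n, add_smul]; abel
          rw [hb2, hbnt] at hp
          exact hp
        have hA : α - x ≤ ‖((α : ℂ) + h) • u₁‖ := by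
          rw [norm_smul, hu₁, mul_one]
          have h1 : ‖(α : ℂ)‖ ≤ ‖(α : ℂ) + h‖ + ‖h‖ := by
            calc ‖(α : ℂ)‖ = ‖((α : ℂ) + h) - h‖ := by congr 1; abel
              _ ≤ ‖(α : ℂ) + h‖ + ‖h‖ := norm_sub_le _ _
          rw [Complex.norm_real, Real.norm_eq_abs, abs_of_pos hα] at h1
          rw [← hx] at h1
          linarith
        have hAx : (α - x) ^ 2 ≤ ‖((α : ℂ) + h) • u₁‖ ^ 2 := by
          have hax0 : 0 ≤ α - x := by
            have := (hxE.trans hEK).trans hKα.le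
            linarith
          exact pow_le_pow_left₀ hax0 hA 2
        have hq : α ^ 2 * (E ^ 2 - x ^ 2) ≤ K ^ 2 * ((α - x) ^ 2 + (E ^ 2 - x ^ 2)) :=
          quad_aux hx0 hxE hEK hKα.le
        have hkey : (α * W) ^ 2 ≤ (K * t) ^ 2 := by
          have hW2 : W ^ 2 = E ^ 2 - x ^ 2 := by linarith
          calc (α * W) ^ 2 = α ^ 2 * (E ^ 2 - x ^ 2) := by rw [← hW2]; ring
            _ ≤ K ^ 2 * ((α - x) ^ 2 + (E ^ 2 - x ^ 2)) := hq
            _ ≤ K ^ 2 * (‖((α : ℂ) + h) • u₁‖ ^ 2 + W ^ 2) := by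
                rw [hW2]
                exact mul_le_mul_of_nonneg_left (by linarith) (by positivity)
            _ = (K * t) ^ 2 := by rw [← hpy2]; ring
        have h3 : α * W ≤ K * t := by
          have hl : 0 ≤ α * W := by positivity
          have hr : 0 ≤ K * t := by positivity
          exact sq_le_aux hl hr hkey
        have h4 : (‖v‖ * α) * t ≤ K * t := by
          calc (‖v‖ * α) * t = α * (t * ‖v‖) := by ring
            _ = α * W := by rw [htW]
            _ ≤ K * t := h3
        exact le_of_mul_le_mul_right h4 ht0'
    -- combine
    have hfin : (μ₁ + ‖C‖) * ‖v‖ ≤ α⁻¹ * (μ₁ + ‖C‖) * (C₁ / c₁) * d := by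
      rw [show α⁻¹ * (μ₁ + ‖C‖) * (C₁ / c₁) * d = ((μ₁ + ‖C‖) * K) / α by
        rw [hK]; field_simp, le_div_iff₀ hα]
      nlinarith [norm_nonneg C, hva, hμ₁, norm_nonneg v]
    calc ‖(inner ℂ (C (a n)) (a n) : ℂ) - (μ₁ : ℂ)‖ ≤ (μ₁ + ‖C‖) * ‖v‖ := hbnd
      _ ≤ α⁻¹ * (μ₁ + ‖C‖) * (C₁ / c₁) * d := hfin
  · -- a n = 0
    have hb0 : (T ^ n) a₀ = 0 := by rw [htb, han, smul_zero]
    have hαK : α ≤ K := by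
      have := hG2
      rw [hb0, zero_sub, norm_neg, hαu] at this
      rw [hK]
      exact this
    have hρ0 : (inner ℂ (C (a n)) (a n) : ℂ) = 0 := by
      rw [han]
      simp
    rw [hρ0, zero_sub, norm_neg, Complex.norm_real, Real.norm_eq_abs, abs_of_pos hμ₁]
    rw [show α⁻¹ * (μ₁ + ‖C‖) * (C₁ / c₁) * d = ((μ₁ + ‖C‖) * K) / α by
      rw [hK]; field_simp, le_div_iff₀ hα]
    nlinarith [norm_nonneg C, hαK, hμ₁]
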